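/- Let A ∈ ℝ^{n×n}, B ∈ ℝ^{n×q}, assume A + A^T is negative definite on the kernel of B^T (x^T(A+A^T)x < 0 for every nonzero x with B^T x = 0), and let M := [[−(A+A^T), B],[B^T, 0]]. Let M = Q · blkdiag(Λ₊, Λ₋) · Q^T be an orthogonal eigendecomposition of M, where Λ₊ ∈ ℝ^{n×n} is diagonal containing the n positive eigenvalues of M and Λ₋ ∈ ℝ^{q×q} is diagonal containing the q negative eigenvalues. Partition the orthogonal matrix Q = [[Q₁₁, Q₁₂],[Q₂₁, Q₂₂]] with Q₁₁ ∈ ℝ^{n×n}; then Q₁₁ is nonsingular. Moreover, for any H₂ ∈ ℝ^{q×n} such that I − Q₁₂H₂ is nonsingular and α := ‖H₂ (I − Q₁₂ H₂)^{-1} Q₁₁‖₂² satisfies min λ(Λ₊) > α · max λ(|Λ₋|), the feedback matrix K := Q₂₁ Q₁₁^{-1} + (Q₂₂ − Q₂₁ Q₁₁^{-1} Q₁₂) H₂ is dissipating, i.e. (A−BK)+(A−BK)^T is negative definite. -/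

import Mathlib

open Matrix
open scoped Matrix.Norms.L2Operator

lemma quad_decomp' {m : Type*} [Fintype m]
    (Q D : Matrix m m ℝ) (v : m → ℝ) :
    v ⬝ᵥ ((Q * D * Qᵀ) *ᵥ v) = (Qᵀ *ᵥ v) ⬝ᵥ (D *ᵥ (Qᵀ *ᵥ v)) := by
  rw [← mulVec_mulVec, ← mulVec_mulVec, dotProduct_mulVec (A := Q),
    ← vecMul_transpose (A := Qᵀ)]
  simp

lemma euclid_norm_sq' {k : Type*} [Fintype k] (y : k → ℝ) :
    ‖(EuclideanSpace.equiv k ℝ).symm y‖ ^ 2 = ∑ i, y i ^ 2 := by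
  rw [EuclideanSpace.norm_eq, Real.sq_sqrt (by positivity)]
  simp [sq_abs]

lemma sq_sum_mulVec_le' {p r : Type*} [Fintype p] [Fintype r] [DecidableEq r]
    (W : Matrix p r ℝ) (a : r → ℝ) :
    ∑ j, (W *ᵥ a) j ^ 2 ≤ ‖W‖ ^ 2 * ∑ i, a i ^ 2 := by
  have h : ‖(EuclideanSpace.equiv p ℝ).symm (W *ᵥ a)‖ ≤
      ‖W‖ * ‖(EuclideanSpace.equiv r ℝ).symm a‖ :=
    Matrix.l2_opNorm_mulVec W ((EuclideanSpace.equiv r ℝ).symm a)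
  have h3 := euclid_norm_sq' (W *ᵥ a)
  have h4 := euclid_norm_sq' a
  nlinarith [norm_nonneg ((EuclideanSpace.equiv p ℝ).symm (W *ᵥ a)),
    norm_nonneg W, norm_nonneg ((EuclideanSpace.equiv r ℝ).symm a),
    mul_nonneg (norm_nonneg W) (norm_nonneg ((EuclideanSpace.equiv r ℝ).symm a))]

lemma diag_quad_eq' {k : Type*} [Fintype k] [DecidableEq k] (d w : k → ℝ) :
    w ⬝ᵥ (Matrix.diagonal d *ᵥ w) = ∑ i, d i * w i ^ 2 := by
  simp only [dotProduct, Matrix.mulVec_diagonal]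
  exact Finset.sum_congr rfl fun i _ => by ring

lemma sum_sq_pos_of_ne_zero' {k : Type*} [Fintype k] {w : k → ℝ} (hw : w ≠ 0) :
    0 < ∑ i, w i ^ 2 := by
  obtain ⟨i, hi⟩ := Function.ne_iff.1 hw
  exact Finset.sum_pos' (fun j _ => sq_nonneg _)
    ⟨i, Finset.mem_univ i, lt_of_le_of_ne (sq_nonneg _) (Ne.symm (pow_ne_zero 2 hi))⟩

/-- Proposition on new parametrization: given an orthogonal
eigendecomposition `M = Q blkdiag(Λ₊, Λ₋) Qᵀ` of the saddle-point matrix, the block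
`Q₁₁` is nonsingular, and for any `H₂` with `I − Q₁₂H₂` nonsingular and
`α = ‖H₂(I − Q₁₂H₂)⁻¹Q₁₁‖₂²` satisfying `min λ(Λ₊) > α · max λ(|Λ₋|)`, the feedback
`K = Q₂₁Q₁₁⁻¹ + (Q₂₂ − Q₂₁Q₁₁⁻¹Q₁₂)H₂` is dissipating. -/
theorem new_parametrization_dissipates {n q : ℕ}
    (A : Matrix (Fin n) (Fin n) ℝ) (B : Matrix (Fin n) (Fin q) ℝ)
    (hker : ∀ x : Fin n → ℝ, x ≠ 0 → Bᵀ *ᵥ x = 0 → x ⬝ᵥ ((A + Aᵀ) *ᵥ x) < 0)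
    (Q : Matrix (Fin n ⊕ Fin q) (Fin n ⊕ Fin q) ℝ)
    (horth : Qᵀ * Q = 1)
    (dp : Fin n → ℝ) (hdp : ∀ i, 0 < dp i)
    (dm : Fin q → ℝ) (hdm : ∀ j, dm j < 0)
    (hdecomp : Matrix.fromBlocks (-(A + Aᵀ)) B Bᵀ 0 =
      Q * Matrix.fromBlocks (Matrix.diagonal dp) 0 0 (Matrix.diagonal dm) * Qᵀ) :
    IsUnit Q.toBlocks₁₁.det ∧
      ∀ H₂ : Matrix (Fin q) (Fin n) ℝ,
        IsUnit (1 - Q.toBlocks₁₂ * H₂).det →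
        (∀ i j, ‖H₂ * (1 - Q.toBlocks₁₂ * H₂)⁻¹ * Q.toBlocks₁₁‖ ^ 2 * |dm j| < dp i) →
        ∀ x : Fin n → ℝ, x ≠ 0 →
          x ⬝ᵥ (((A - B * (Q.toBlocks₂₁ * Q.toBlocks₁₁⁻¹ +
              (Q.toBlocks₂₂ - Q.toBlocks₂₁ * Q.toBlocks₁₁⁻¹ * Q.toBlocks₁₂) * H₂)) +
            (A - B * (Q.toBlocks₂₁ * Q.toBlocks₁₁⁻¹ +
              (Q.toBlocks₂₂ - Q.toBlocks₂₁ * Q.toBlocks₁₁⁻¹ * Q.toBlocks₁₂) * H₂))ᵀ) *ᵥ x) < 0 := by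
  set Q11 := Q.toBlocks₁₁ with hQ11
  set Q12 := Q.toBlocks₁₂ with hQ12
  set Q21 := Q.toBlocks₂₁ with hQ21
  set Q22 := Q.toBlocks₂₂ with hQ22
  set D : Matrix (Fin n ⊕ Fin q) (Fin n ⊕ Fin q) ℝ :=
    Matrix.fromBlocks (Matrix.diagonal dp) 0 0 (Matrix.diagonal dm) with hD
  set M : Matrix (Fin n ⊕ Fin q) (Fin n ⊕ Fin q) ℝ :=
    Matrix.fromBlocks (-(A + Aᵀ)) B Bᵀ 0 with hM
  have hQ : Matrix.fromBlocks Q11 Q12 Q21 Q22 = Q := Matrix.fromBlocks_toBlocks Q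
  -- block equations of orthogonality
  have horth' : Matrix.fromBlocks (Q11ᵀ * Q11 + Q21ᵀ * Q21) (Q11ᵀ * Q12 + Q21ᵀ * Q22)
      (Q12ᵀ * Q11 + Q22ᵀ * Q21) (Q12ᵀ * Q12 + Q22ᵀ * Q22) =
      Matrix.fromBlocks 1 0 0 1 := by
    rw [← Matrix.fromBlocks_multiply, ← Matrix.fromBlocks_transpose, hQ,
      Matrix.fromBlocks_one, horth]
  obtain ⟨h11, h12, h21, h22⟩ := Matrix.fromBlocks_inj.1 horth'
  -- nonsingularity of Q11
  have hdet : Q11.det ≠ 0 := by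
    intro hd
    obtain ⟨w, hw, hw0⟩ := Matrix.exists_mulVec_eq_zero_iff.2 hd
    set u : Fin n ⊕ Fin q → ℝ := Sum.elim w 0 with hu
    set v : Fin n ⊕ Fin q → ℝ := Q *ᵥ u with hv
    have hv' : v = Sum.elim (0 : Fin n → ℝ) (Q21 *ᵥ w) := by
      rw [hv, ← hQ, Matrix.fromBlocks_mulVec]
      simp [hu, hw0]
    have e1 : v ⬝ᵥ (M *ᵥ v) = 0 := by
      rw [hv', hM, Matrix.fromBlocks_mulVec]
      simp [sumElim_dotProduct_sumElim]
    have e2 : v ⬝ᵥ (M *ᵥ v) = w ⬝ᵥ (Matrix.diagonal dp *ᵥ w) := by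
      rw [hdecomp, quad_decomp', hv]
      have hQv : Qᵀ *ᵥ (Q *ᵥ u) = u := by
        rw [Matrix.mulVec_mulVec, horth, Matrix.one_mulVec]
      rw [hQv, hD, Matrix.fromBlocks_mulVec, hu]
      simp [sumElim_dotProduct_sumElim]
    rw [e2, diag_quad_eq'] at e1
    have hpos : 0 < ∑ i, dp i * w i ^ 2 := by
      obtain ⟨i, hi⟩ := Function.ne_iff.1 hw
      exact Finset.sum_pos' (fun j _ => mul_nonneg (hdp j).le (sq_nonneg _))
        ⟨i, Finset.mem_univ i, mul_pos (hdp i)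
          (lt_of_le_of_ne (sq_nonneg _) (Ne.symm (pow_ne_zero 2 hi)))⟩
    linarith
  have hdetU : IsUnit Q11.det := isUnit_iff_ne_zero.2 hdet
  refine ⟨hdetU, ?_⟩
  intro H₂ hTdet hα x hx
  set P := Q11⁻¹ with hP
  have hPr : Q11 * P = 1 := Matrix.mul_nonsing_inv _ hdetU
  have hPl : P * Q11 = 1 := Matrix.nonsing_inv_mul _ hdetU
  set T := 1 - Q12 * H₂ with hT
  have hTl : T⁻¹ * T = 1 := Matrix.nonsing_inv_mul _ hTdet
  set W := H₂ * T⁻¹ * Q11 with hW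
  set G := Q22 - Q21 * P * Q12 with hG
  set K := Q21 * P + G * H₂ with hK
  -- key matrix identities
  have hc : Q22ᵀ * Q21 = -(Q12ᵀ * Q11) := by
    rw [eq_neg_iff_add_eq_zero, add_comm]; exact h21
  have hc' : Q21ᵀ * Q22 = -(Q11ᵀ * Q12) := by
    rw [eq_neg_iff_add_eq_zero, add_comm]; exact h12
  have hb : Q22ᵀ * Q22 = 1 - Q12ᵀ * Q12 := eq_sub_of_add_eq' h22
  have hb' : Q21ᵀ * Q21 = 1 - Q11ᵀ * Q11 := eq_sub_of_add_eq' h11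
  have ha : Q22ᵀ * (Q21 * P) = -Q12ᵀ := by
    rw [← Matrix.mul_assoc, hc, Matrix.neg_mul, Matrix.mul_assoc, hPr, Matrix.mul_one]
  have ha' : Q21ᵀ * (Q21 * P) = P - Q11ᵀ := by
    rw [← Matrix.mul_assoc, hb', Matrix.sub_mul, Matrix.one_mul,
      Matrix.mul_assoc, hPr, Matrix.mul_one]
  have hQ22G : Q22ᵀ * G = 1 := by
    rw [hG, Matrix.mul_sub, hb, ← Matrix.mul_assoc Q22ᵀ (Q21 * P) Q12, ha,
      Matrix.neg_mul, sub_neg_eq_add, sub_add_cancel]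
  have hQ21G : Q21ᵀ * G = -(P * Q12) := by
    rw [hG, Matrix.mul_sub, hc', ← Matrix.mul_assoc Q21ᵀ (Q21 * P) Q12, ha',
      Matrix.sub_mul]
    abel
  have hE1 : Q12ᵀ + Q22ᵀ * K = H₂ := by
    rw [hK, Matrix.mul_add, ha, ← Matrix.mul_assoc, hQ22G, Matrix.one_mul]
    abel
  have hE2 : Q11ᵀ + Q21ᵀ * K = P * T := by
    rw [hK, Matrix.mul_add, ha', ← Matrix.mul_assoc, hQ21G, hT,
      Matrix.mul_sub, Matrix.mul_one, Matrix.neg_mul, Matrix.mul_assoc]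
    abel
  have hWPT : W * (P * T) = H₂ := by
    rw [hW, Matrix.mul_assoc (H₂ * T⁻¹) Q11 (P * T), ← Matrix.mul_assoc Q11 P T,
      hPr, Matrix.one_mul, Matrix.mul_assoc, hTl, Matrix.mul_one]
  -- vectors
  set a : Fin n → ℝ := (P * T) *ᵥ x with ha_def
  set b : Fin q → ℝ := H₂ *ᵥ x with hb_def
  have hba : b = W *ᵥ a := by
    rw [hb_def, ha_def, Matrix.mulVec_mulVec, hWPT]
  have ha_ne : a ≠ 0 := by
    intro h0
    apply hx
    have hinv : (T⁻¹ * Q11) * (P * T) = 1 := by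
      rw [Matrix.mul_assoc (T⁻¹) Q11 (P * T), ← Matrix.mul_assoc Q11 P T,
        hPr, Matrix.one_mul, hTl]
    have hxa : x = (T⁻¹ * Q11) *ᵥ a := by
      rw [ha_def, Matrix.mulVec_mulVec, hinv, Matrix.one_mulVec]
    rw [hxa, h0, Matrix.mulVec_zero]
  set v : Fin n ⊕ Fin q → ℝ := Sum.elim x (K *ᵥ x) with hv
  have hu : Qᵀ *ᵥ v = Sum.elim a b := by
    rw [← hQ, Matrix.fromBlocks_transpose, hv, Matrix.fromBlocks_mulVec]
    have htop : Q11ᵀ *ᵥ ((Sum.elim x (K *ᵥ x)) ∘ Sum.inl) +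
        Q21ᵀ *ᵥ ((Sum.elim x (K *ᵥ x)) ∘ Sum.inr) = a := by
      simp only [Sum.elim_comp_inl, Sum.elim_comp_inr, Matrix.mulVec_mulVec]
      rw [← Matrix.add_mulVec, hE2]
    have hbot : Q12ᵀ *ᵥ ((Sum.elim x (K *ᵥ x)) ∘ Sum.inl) +
        Q22ᵀ *ᵥ ((Sum.elim x (K *ᵥ x)) ∘ Sum.inr) = b := by
      simp only [Sum.elim_comp_inl, Sum.elim_comp_inr, Matrix.mulVec_mulVec]
      rw [← Matrix.add_mulVec, hE1]
    rw [htop, hbot]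
  have hquad : v ⬝ᵥ (M *ᵥ v) =
      a ⬝ᵥ (Matrix.diagonal dp *ᵥ a) + b ⬝ᵥ (Matrix.diagonal dm *ᵥ b) := by
    rw [hdecomp, quad_decomp', hu, hD, Matrix.fromBlocks_mulVec]
    simp [sumElim_dotProduct_sumElim]
  -- goal equals -(vᵀ M v)
  have e1 : v ⬝ᵥ (M *ᵥ v) = -(x ⬝ᵥ (A *ᵥ x)) - x ⬝ᵥ (Aᵀ *ᵥ x) +
      x ⬝ᵥ (B *ᵥ (K *ᵥ x)) + (K *ᵥ x) ⬝ᵥ (Bᵀ *ᵥ x) := by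
    rw [hM, hv, Matrix.fromBlocks_mulVec]
    simp only [Sum.elim_comp_inl, Sum.elim_comp_inr, Matrix.zero_mulVec, add_zero,
      sumElim_dotProduct_sumElim, Matrix.neg_mulVec, Matrix.add_mulVec,
      dotProduct_add, dotProduct_neg]
    ring
  have e2 : (K *ᵥ x) ⬝ᵥ (Bᵀ *ᵥ x) = x ⬝ᵥ (B *ᵥ (K *ᵥ x)) := by
    rw [Matrix.dotProduct_mulVec, Matrix.vecMul_transpose, dotProduct_comm]
  have e3 : x ⬝ᵥ ((B * K)ᵀ *ᵥ x) = x ⬝ᵥ (B *ᵥ (K *ᵥ x)) := by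
    rw [Matrix.dotProduct_mulVec, Matrix.vecMul_transpose, dotProduct_comm,
      ← Matrix.mulVec_mulVec]
  have e4 : x ⬝ᵥ (((A - B * K) + (A - B * K)ᵀ) *ᵥ x) =
      x ⬝ᵥ (A *ᵥ x) + x ⬝ᵥ (Aᵀ *ᵥ x) - x ⬝ᵥ (B *ᵥ (K *ᵥ x)) -
        x ⬝ᵥ ((B * K)ᵀ *ᵥ x) := by
    simp only [Matrix.add_mulVec, Matrix.sub_mulVec, Matrix.transpose_sub,
      dotProduct_add, dotProduct_sub, ← Matrix.mulVec_mulVec]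
    ring
  have hgoal : x ⬝ᵥ (((A - B * K) + (A - B * K)ᵀ) *ᵥ x) = -(v ⬝ᵥ (M *ᵥ v)) := by
    rw [e4, e3]; linarith [e1, e2]
  rw [hgoal, neg_lt_zero, hquad, diag_quad_eq', diag_quad_eq']
  -- final numeric estimate
  have hsa : 0 < ∑ i, a i ^ 2 := sum_sq_pos_of_ne_zero' ha_ne
  have hbb : ∑ j, b j ^ 2 ≤ ‖W‖ ^ 2 * ∑ i, a i ^ 2 := by
    rw [hba]; exact sq_sum_mulVec_le' W a
  have hnn : Nonempty (Fin n) := by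
    rcases isEmpty_or_nonempty (Fin n) with hn | hn
    · exact absurd (Subsingleton.elim x 0) hx
    · exact hn
  obtain ⟨i0, _, hi0⟩ := Finset.exists_min_image Finset.univ dp
    (Finset.univ_nonempty (α := Fin n))
  have hlow : dp i0 * ∑ i, a i ^ 2 ≤ ∑ i, dp i * a i ^ 2 := by
    rw [Finset.mul_sum]
    exact Finset.sum_le_sum fun i _ =>
      mul_le_mul_of_nonneg_right (hi0 i (Finset.mem_univ i)) (sq_nonneg _)
  rcases isEmpty_or_nonempty (Fin q) with hq | hq
  · have hzero : ∑ j, dm j * b j ^ 2 = 0 := by simp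
    rw [hzero, add_zero]
    exact lt_of_lt_of_le (mul_pos (hdp i0) hsa) hlow
  · obtain ⟨j0, _, hj0⟩ := Finset.exists_max_image Finset.univ (fun j => |dm j|)
      (Finset.univ_nonempty (α := Fin q))
    have hup : ∑ j, (-(dm j)) * b j ^ 2 ≤ |dm j0| * ∑ j, b j ^ 2 := by
      rw [Finset.mul_sum]
      refine Finset.sum_le_sum fun j _ => ?_
      have : -(dm j) ≤ |dm j0| := le_trans (le_abs_self _ |>.trans_eq (abs_neg _).symm
        |>.trans_eq (congrArg abs rfl)) (by simpa [abs_neg] using hj0 j (Finset.mem_univ j))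
      exact mul_le_mul_of_nonneg_right this (sq_nonneg _)
    have hchain : |dm j0| * ∑ j, b j ^ 2 < dp i0 * ∑ i, a i ^ 2 := by
      calc |dm j0| * ∑ j, b j ^ 2 ≤ |dm j0| * (‖W‖ ^ 2 * ∑ i, a i ^ 2) :=
            mul_le_mul_of_nonneg_left hbb (abs_nonneg _)
        _ = (‖W‖ ^ 2 * |dm j0|) * ∑ i, a i ^ 2 := by ring
        _ < dp i0 * ∑ i, a i ^ 2 :=
            mul_lt_mul_of_pos_right (hα i0 j0) hsa
    have : ∑ j, (-(dm j)) * b j ^ 2 < ∑ i, dp i * a i ^ 2 :=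
      lt_of_le_of_lt hup (lt_of_lt_of_le hchain hlow)
    have hsum : ∑ j, (-(dm j)) * b j ^ 2 = -∑ j, dm j * b j ^ 2 := by
      rw [← Finset.sum_neg_distrib]
      exact Finset.sum_congr rfl fun j _ => by ring
    linarith [this, hsum.symm.le]
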